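/- With N = p1^m·p2 and D_0, ..., D_{p1p2−1} as in the context: every a ∈ {0, 1, ..., N−1} has a unique representation a ≡ −p2·i_a + p1^{m−1}·j_a (mod N) with 0 ≤ i_a ≤ p1^{m−1}−1 and 0 ≤ j_a ≤ p1·p2−1; and if a, a' ∈ {0, 1, ..., N−1} satisfy j_a = j_{a'}, then for every k with 0 ≤ k ≤ p1·p2−1, Σ_{x ∈ D_k} ψ(γ^a · x) = Σ_{x ∈ D_k} ψ(γ^{a'} · x). In other words, the character sum ψ over γ^a·D_k depends only on j_a and k, not on i_a. -/

import Mathlib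

open scoped Classical

noncomputable section

lemma aux_lift1 (P x j : ℕ) (hj : 1 ≤ j) (h : x ≡ 1 [MOD P ^ j]) :
    x ^ P ≡ 1 [MOD P ^ (j + 1)] := by
  have h1 : ((P : ℤ)) ^ j ∣ (x : ℤ) - 1 := by
    have := (Nat.modEq_iff_dvd.mp h.symm)
    push_cast at this ⊢
    exact this
  have h2 : (P : ℤ) ∣ (∑ i ∈ Finset.range P, (x : ℤ) ^ i) := by
    have hx0 : ((x : ℕ) : ZMod P) = 1 := by
      have hd : ((P : ℤ)) ∣ (x : ℤ) - 1 :=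
        dvd_trans (dvd_pow_self _ (by omega)) h1
      have h0 := (ZMod.intCast_zmod_eq_zero_iff_dvd ((x:ℤ)-1) P).mpr hd
      push_cast at h0
      linear_combination h0
    have : ((∑ i ∈ Finset.range P, (x : ℤ) ^ i : ℤ) : ZMod P) = 0 := by
      push_cast
      rw [hx0]
      simp
    exact (ZMod.intCast_zmod_eq_zero_iff_dvd _ P).mp this
  have h3 : ((P : ℤ)) ^ (j + 1) ∣ (x : ℤ) ^ P - 1 := by
    calc ((P:ℤ)) ^ (j+1) = (P:ℤ) * (P:ℤ)^j := by ring
      _ ∣ (∑ i ∈ Finset.range P, (x : ℤ) ^ i) * ((x:ℤ) - 1) := mul_dvd_mul h2 h1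
      _ = (x:ℤ) ^ P - 1 := geom_sum_mul (x : ℤ) P
  exact (Nat.modEq_iff_dvd.mpr (by push_cast; exact h3)).symm

/-- order of p mod a smaller prime power -/
lemma aux_order_smaller (p1 p m k : ℕ) (hp1 : p1.Prime)
    (hord1 : orderOf (p : ZMod (p1 ^ m)) = Nat.totient (p1 ^ m))
    (hcop : Nat.Coprime p p1) (hk : 1 ≤ k) (hkm : k ≤ m) :
    orderOf (p : ZMod (p1 ^ k)) = Nat.totient (p1 ^ k) := by
  have hp1pos : 0 < p1 := hp1.pos
  have hcopk : Nat.Coprime p (p1 ^ k) := hcop.pow_right k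
  have hm1 : 1 ≤ m := le_trans hk hkm
  set a := orderOf (p : ZMod (p1 ^ k)) with ha
  -- a ∣ totient (p1^k)
  have hdvd1 : a ∣ Nat.totient (p1 ^ k) := by
    apply orderOf_dvd_of_pow_eq_one
    have := Nat.ModEq.pow_totient hcopk
    have := (ZMod.natCast_eq_natCast_iff _ _ _).mpr this
    push_cast at this
    exact this
  -- p^a ≡ 1 [MOD p1^k]
  have hpa : p ^ a ≡ 1 [MOD p1 ^ k] := by
    have : ((p : ZMod (p1 ^ k))) ^ a = 1 := pow_orderOf_eq_one _
    have : ((p ^ a : ℕ) : ZMod (p1 ^ k)) = ((1 : ℕ) : ZMod (p1 ^ k)) := by push_cast; simpa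
    exact (ZMod.natCast_eq_natCast_iff _ _ _).mp this
  -- lift
  have hlift : ∀ d : ℕ, p ^ (a * p1 ^ d) ≡ 1 [MOD p1 ^ (k + d)] := by
    intro d
    induction d with
    | zero => simpa using hpa
    | succ d ih =>
        have := aux_lift1 p1 (p ^ (a * p1 ^ d)) (k + d) (by omega) ih
        rw [← pow_mul] at this
        have heq : a * p1 ^ d * p1 = a * p1 ^ (d + 1) := by ring
        rw [heq] at this
        simpa [Nat.add_assoc] using this
  have hlift2 : p ^ (a * p1 ^ (m - k)) ≡ 1 [MOD p1 ^ m] := by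
    have := hlift (m - k)
    rwa [Nat.add_sub_cancel' hkm] at this
  have hdvd2 : Nat.totient (p1 ^ m) ∣ a * p1 ^ (m - k) := by
    rw [← hord1]
    apply orderOf_dvd_of_pow_eq_one
    have := (ZMod.natCast_eq_natCast_iff _ _ _).mpr hlift2
    push_cast at this
    exact this
  have htotm : Nat.totient (p1 ^ m) = p1 ^ (m - k) * Nat.totient (p1 ^ k) := by
    rw [Nat.totient_prime_pow hp1 (by omega), Nat.totient_prime_pow hp1 (by omega)]
    rw [← mul_assoc, ← pow_add]
    congr 2
    omega
  have hdvd3 : Nat.totient (p1 ^ k) ∣ a := by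
    have h4 : p1 ^ (m - k) * Nat.totient (p1 ^ k) ∣ p1 ^ (m - k) * a := by
      rw [← htotm]
      simpa [mul_comm] using hdvd2
    exact (mul_dvd_mul_iff_left (by positivity : (0:ℕ) < p1 ^ (m-k)).ne').mp h4
  exact Nat.dvd_antisymm hdvd1 hdvd3

lemma aux_core (p1 p2 m p : ℕ) (hp1 : p1.Prime) (hp2 : p2.Prime) (hm : 1 ≤ m)
    (hp1odd : p1 % 2 = 1) (hne : p1 ≠ p2)
    (hcop1 : Nat.Coprime p p1) (hcop2 : Nat.Coprime p p2)
    (hord1 : orderOf (p : ZMod (p1 ^ m)) = Nat.totient (p1 ^ m))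
    (hord2 : orderOf (p : ZMod p2) = Nat.totient p2)
    (hgcd : Nat.gcd (Nat.totient (p1 ^ m)) (Nat.totient p2) = 2)
    (s : ℕ) (hs : ¬ p1 ^ (m - 1) ∣ s) :
    ∃ e, p ^ e * s ≡ s + p1 ^ (m - 1) * p2 [MOD p1 ^ m * p2] := by
  have hp1pos : 0 < p1 := hp1.pos
  have hs0 : s ≠ 0 := by rintro rfl; exact hs (dvd_zero _)
  obtain ⟨v1, w, hw, hsw⟩ := Nat.exists_eq_pow_mul_and_not_dvd hs0 p1 hp1.ne_one
  have hv1 : v1 + 2 ≤ m := by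
    by_contra hcon
    exact hs (hsw ▸ dvd_mul_of_dvd_left (pow_dvd_pow p1 (by omega)) w)
  set k := m - v1 with hkdef
  have hk2 : 2 ≤ k := by omega
  have hvk : v1 + k = m := by omega
  haveI : NeZero (p1 ^ k) := ⟨pow_ne_zero _ hp1pos.ne'⟩
  have hcopk : Nat.Coprime p (p1 ^ k) := hcop1.pow_right k
  have oEq : orderOf (p : ZMod (p1 ^ k)) = Nat.totient (p1 ^ k) :=
    aux_order_smaller p1 p m k hp1 hord1 hcop1 (by omega) (by omega)
  -- inverse of w
  have hcw : Nat.Coprime p1 w := (Nat.Prime.coprime_iff_not_dvd hp1).mpr hw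
  have hwcop : Nat.Coprime w (p1 ^ k) := hcw.symm.pow_right k
  set w' := ((w : ZMod (p1 ^ k))⁻¹).val with hw'def
  have hww' : w * w' ≡ 1 [MOD p1 ^ k] := by
    have h1 : (w : ZMod (p1 ^ k)) * (w : ZMod (p1 ^ k))⁻¹ = 1 := ZMod.coe_mul_inv_eq_one w hwcop
    have h2 : ((w * w' : ℕ) : ZMod (p1 ^ k)) = ((1 : ℕ) : ZMod (p1 ^ k)) := by
      push_cast
      rw [hw'def, ZMod.natCast_val, ZMod.cast_id]
      exact h1
    exact (ZMod.natCast_eq_natCast_iff _ _ _).mp h2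
  set C := 1 + p1 ^ (k - 1) * p2 * w' with hCdef
  have hC1 : C ≡ 1 [MOD p1 ^ (k - 1)] :=
    ((Nat.modEq_iff_dvd' (by omega)).mpr ⟨p2 * w', by rw [hCdef]; ring_nf; omega⟩).symm
  have hCp : C ^ p1 ≡ 1 [MOD p1 ^ k] := by
    have := aux_lift1 p1 C (k - 1) (by omega) hC1
    rwa [show k - 1 + 1 = k by omega] at this
  have hp1C : ¬ p1 ∣ C := by
    intro hdv
    have h2 : p1 ∣ p1 ^ (k - 1) * p2 * w' :=
      dvd_mul_of_dvd_left (dvd_mul_of_dvd_left (dvd_pow_self p1 (by omega)) _) _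
    have h3 : p1 ∣ 1 := by
      have := Nat.dvd_sub hdv h2
      rwa [hCdef, Nat.add_sub_cancel] at this
    exact hp1.ne_one (Nat.dvd_one.mp h3)
  have hCcop : Nat.Coprime C (p1 ^ k) :=
    ((Nat.Prime.coprime_iff_not_dvd hp1).mpr hp1C).symm.pow_right k
  -- discrete log
  set pu := ZMod.unitOfCoprime p hcopk with hpu
  set cu := ZMod.unitOfCoprime C hCcop with hcu
  have hordpu : orderOf pu = Nat.totient (p1 ^ k) := by
    rw [← oEq, ← orderOf_units, ZMod.coe_unitOfCoprime]
  have hcard : orderOf pu = Fintype.card (ZMod (p1 ^ k))ˣ := by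
    rw [hordpu, ZMod.card_units_eq_totient]
  obtain ⟨x, hx⟩ : ∃ x : ℕ, pu ^ x = cu := by
    have htop : Subgroup.zpowers pu = ⊤ := by
      apply Subgroup.eq_top_of_card_eq
      rw [Nat.card_zpowers, hcard, ← Nat.card_eq_fintype_card]
    have hmem : cu ∈ Subgroup.zpowers pu := htop ▸ Subgroup.mem_top cu
    obtain ⟨x, hx⟩ := mem_powers_iff_mem_zpowers.mpr hmem
    exact ⟨x, hx⟩
  have hcupow : cu ^ p1 = 1 := by
    apply Units.ext
    push_cast
    rw [hcu, ZMod.coe_unitOfCoprime]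
    have := (ZMod.natCast_eq_natCast_iff _ _ _).mpr hCp
    push_cast at this
    simpa using this
  have horddvd : orderOf pu ∣ x * p1 :=
    orderOf_dvd_of_pow_eq_one (by rw [pow_mul, hx, hcupow])
  have hx1 : (p1 - 1) ∣ x := by
    have h5 : p1 ^ (k - 1) * (p1 - 1) ∣ x * p1 := by
      rwa [hordpu, Nat.totient_prime_pow hp1 (by omega)] at horddvd
    have h6 : (p1 - 1) ∣ x * p1 := dvd_trans (dvd_mul_left _ _) h5
    have hco : Nat.Coprime (p1 - 1) p1 := by
      have h := (Nat.coprime_add_self_right (m := p1 - 1) (n := 1)).mpr (Nat.coprime_one_right _)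
      rwa [show 1 + (p1 - 1) = p1 by omega] at h
    exact (Nat.Coprime.dvd_of_dvd_mul_right hco h6)
  have hx2 : 2 ∣ x := dvd_trans ⟨(p1 - 1) / 2, by omega⟩ hx1
  -- CRT for exponent
  set A := Nat.totient (p1 ^ k) with hA
  set B := Nat.totient p2 with hB
  have hgAB : Nat.gcd A B ∣ 2 := by
    rw [← hgcd]
    exact Nat.gcd_dvd_gcd_of_dvd_left B (Nat.totient_dvd_of_dvd (pow_dvd_pow p1 (by omega)))
  have hgx : x ≡ 0 [MOD Nat.gcd A B] :=
    (Nat.modEq_zero_iff_dvd).mpr (dvd_trans hgAB hx2)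
  obtain ⟨e, he1, he2⟩ := Nat.chineseRemainder' hgx
  have hBdvd : B ∣ e := (Nat.modEq_zero_iff_dvd).mp he2
  -- p^e ≡ C mod p1^k
  have hpe1 : p ^ e ≡ C [MOD p1 ^ k] := by
    have hpue : pu ^ e = pu ^ x := by
      have hfin : IsOfFinOrder pu := isOfFinOrder_of_finite pu
      exact (pow_eq_pow_iff_modEq).mpr (by rwa [hordpu])
    have : ((p ^ e : ℕ) : ZMod (p1 ^ k)) = ((C : ℕ) : ZMod (p1 ^ k)) := by
      push_cast
      calc ((p : ZMod (p1 ^ k))) ^ e = ((pu : ZMod (p1 ^ k))) ^ e := by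
            rw [hpu, ZMod.coe_unitOfCoprime]
        _ = (((pu ^ e : (ZMod (p1 ^ k))ˣ)) : ZMod (p1 ^ k)) := by push_cast; ring
        _ = (((cu : (ZMod (p1 ^ k))ˣ)) : ZMod (p1 ^ k)) := by rw [hpue, hx]
        _ = (C : ZMod (p1 ^ k)) := by rw [hcu, ZMod.coe_unitOfCoprime]
    exact (ZMod.natCast_eq_natCast_iff _ _ _).mp this
  -- p^e ≡ 1 mod p2
  have hpe2 : p ^ e ≡ 1 [MOD p2] := by
    have : ((p : ZMod p2)) ^ e = 1 := orderOf_dvd_iff_pow_eq_one.mp (by rw [hord2]; exact hBdvd)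
    have h2 : ((p ^ e : ℕ) : ZMod p2) = ((1 : ℕ) : ZMod p2) := by push_cast; simpa
    exact (ZMod.natCast_eq_natCast_iff _ _ _).mp h2
  -- assemble
  refine ⟨e, ?_⟩
  have hcopN : Nat.Coprime (p1 ^ m) p2 := ((Nat.coprime_primes hp1 hp2).mpr hne).pow_left m
  rw [← Nat.modEq_and_modEq_iff_modEq_mul hcopN]
  constructor
  · -- mod p1^m
    have hw1 : p ^ e * w ≡ C * w [MOD p1 ^ k] := hpe1.mul_right w
    have hw2 : C * w = w + p1 ^ (k - 1) * p2 * (w * w') := by rw [hCdef]; ring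
    have hw3 : w + p1 ^ (k - 1) * p2 * (w * w') ≡ w + p1 ^ (k - 1) * p2 * 1 [MOD p1 ^ k] :=
      Nat.ModEq.add_left w (hww'.mul_left (p1 ^ (k - 1) * p2))
    have hw4 : p ^ e * w ≡ w + p1 ^ (k - 1) * p2 [MOD p1 ^ k] := by
      calc p ^ e * w ≡ C * w [MOD p1 ^ k] := hw1
        _ = w + p1 ^ (k - 1) * p2 * (w * w') := hw2
        _ ≡ w + p1 ^ (k - 1) * p2 * 1 [MOD p1 ^ k] := hw3
        _ = w + p1 ^ (k - 1) * p2 := by ring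
    have hw5 := hw4.mul_left' (c := p1 ^ v1)
    have e1 : p1 ^ v1 * (p ^ e * w) = p ^ e * s := by rw [hsw]; ring
    have e2 : p1 ^ v1 * (w + p1 ^ (k - 1) * p2) = s + p1 ^ (m - 1) * p2 := by
      rw [hsw, Nat.mul_add, ← mul_assoc, ← pow_add, show v1 + (k - 1) = m - 1 by omega]
    have e3 : p1 ^ v1 * p1 ^ k = p1 ^ m := by rw [← pow_add, hvk]
    rwa [e1, e2, e3] at hw5
  · -- mod p2
    have h1 : p ^ e * s ≡ 1 * s [MOD p2] := hpe2.mul_right s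
    have h2 : s + p1 ^ (m - 1) * p2 ≡ s + 0 [MOD p2] :=
      Nat.ModEq.add_left s ((Nat.modEq_zero_iff_dvd).mpr (dvd_mul_left p2 _))
    calc p ^ e * s ≡ 1 * s [MOD p2] := h1
      _ = s + 0 := by ring
      _ ≡ s + p1 ^ (m - 1) * p2 [MOD p2] := h2.symm

lemma aux_part1 (p1 p2 m : ℕ) (hp1 : p1.Prime) (hp2 : p2.Prime) (hne : p1 ≠ p2) (hm : 1 ≤ m) :
    ∀ a : ℕ, ∃! ij : ℕ × ℕ, (ij.1 < p1 ^ (m - 1) ∧ ij.2 < p1 * p2) ∧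
      ((a : ZMod (p1 ^ m * p2)) = -((p2 * ij.1 : ℕ) : ZMod (p1 ^ m * p2)) +
        ((p1 ^ (m - 1) * ij.2 : ℕ) : ZMod (p1 ^ m * p2))) := by
  have hp1pos : 0 < p1 := hp1.pos
  have hp2pos : 0 < p2 := hp2.pos
  set N := p1 ^ m * p2 with hNdef
  set P := p1 ^ (m - 1) with hPdef
  have hPpos : 0 < P := by positivity
  have hNP : N = P * (p1 * p2) := by
    rw [hNdef, hPdef]
    conv_lhs => rw [show m = (m - 1) + 1 by omega]
    ring
  have hNpos : 0 < N := by rw [hNP]; positivity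
  haveI : NeZero N := ⟨hNpos.ne'⟩
  have hdvdPN : P ∣ N := ⟨p1 * p2, hNP⟩
  have hcoP2 : Nat.Coprime P p2 :=
    Nat.Coprime.pow_left _ ((Nat.coprime_primes hp1 hp2).mpr hne)
  -- injectivity
  have hinj : ∀ i j i' j' : ℕ, i < P → i' < P → j < p1 * p2 → j' < p1 * p2 →
      (-((p2 * i : ℕ) : ZMod N) + ((P * j : ℕ) : ZMod N)
        = -((p2 * i' : ℕ) : ZMod N) + ((P * j' : ℕ) : ZMod N)) → i = i' ∧ j = j' := by
    intro i j i' j' hi hi' hj hj' heq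
    have hieq : i = i' := by
      have h1 := congrArg (ZMod.castHom hdvdPN (ZMod P)) heq
      simp only [map_add, map_neg, map_natCast] at h1
      have hz : ∀ j0 : ℕ, ((P * j0 : ℕ) : ZMod P) = 0 := by
        intro j0; push_cast; simp [ZMod.natCast_self]
      rw [hz j, hz j'] at h1
      have h2 : ((p2 * i : ℕ) : ZMod P) = ((p2 * i' : ℕ) : ZMod P) := by
        push_cast
        exact neg_injective (by simpa using h1)
      have h3 : p2 * i ≡ p2 * i' [MOD P] := (ZMod.natCast_eq_natCast_iff _ _ _).mp h2
      have h4 : i ≡ i' [MOD P] := Nat.ModEq.cancel_left_of_coprime hcoP2 h3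
      rwa [Nat.ModEq, Nat.mod_eq_of_lt hi, Nat.mod_eq_of_lt hi'] at h4
    subst hieq
    have h5 : ((P * j : ℕ) : ZMod N) = ((P * j' : ℕ) : ZMod N) := by
      exact add_left_cancel heq
    have h6 : P * j ≡ P * j' [MOD P * (p1 * p2)] := by
      rw [← hNP]; exact (ZMod.natCast_eq_natCast_iff _ _ _).mp h5
    have h7 : j ≡ j' [MOD p1 * p2] := Nat.ModEq.mul_left_cancel' hPpos.ne' h6
    exact ⟨rfl, by rwa [Nat.ModEq, Nat.mod_eq_of_lt hj, Nat.mod_eq_of_lt hj'] at h7⟩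
  -- surjectivity via counting
  intro a
  classical
  set S : Finset (ℕ × ℕ) := Finset.range P ×ˢ Finset.range (p1 * p2) with hS
  set f : ℕ × ℕ → ZMod N := fun ij => -((p2 * ij.1 : ℕ) : ZMod N) + ((P * ij.2 : ℕ) : ZMod N)
    with hf
  have hinjS : Set.InjOn f S := by
    intro x hx y hy hxy
    simp only [hS, Finset.coe_product, Set.mem_prod, Finset.coe_range, Set.mem_Iio] at hx hy
    obtain ⟨h1, h2⟩ := hinj x.1 x.2 y.1 y.2 hx.1 hy.1 hx.2 hy.2 hxy
    exact Prod.ext h1 h2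
  have hcard : (S.image f).card = Fintype.card (ZMod N) := by
    rw [Finset.card_image_of_injOn hinjS, hS, Finset.card_product, Finset.card_range,
      Finset.card_range, ZMod.card, hNP]
  have huniv : S.image f = Finset.univ :=
    Finset.eq_univ_of_card _ hcard
  have hmem : (a : ZMod N) ∈ S.image f := by rw [huniv]; exact Finset.mem_univ _
  obtain ⟨ij, hijS, hijeq⟩ := Finset.mem_image.mp hmem
  simp only [hS, Finset.mem_product, Finset.mem_range] at hijS
  refine ⟨ij, ⟨⟨hijS.1, hijS.2⟩, hijeq.symm⟩, ?_⟩
  rintro ⟨i', j'⟩ ⟨⟨hi', hj'⟩, heq'⟩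
  obtain ⟨h1, h2⟩ := hinj i' j' ij.1 ij.2 hi' hijS.1 hj' hijS.2 (heq'.symm.trans hijeq.symm)
  exact Prod.ext h1 h2

lemma aux_trace_frob (p : ℕ) (hp : p.Prime) (F : Type) [Field F] [Fintype F]
    [Algebra (ZMod p) F] (x : F) :
    Algebra.trace (ZMod p) F (x ^ p) = Algebra.trace (ZMod p) F x := by
  haveI := Fact.mk hp
  haveI : CharP F p := charP_of_injective_algebraMap (algebraMap (ZMod p) F).injective p
  let σ : F ≃ₐ[ZMod p] F := AlgEquiv.ofRingEquiv (f := frobeniusEquiv F p) (fun c => by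
    rw [frobeniusEquiv_apply, frobenius_def, ← map_pow, ZMod.pow_card])
  have hσ : σ x = x ^ p := by
    show frobeniusEquiv F p x = x ^ p
    rw [frobeniusEquiv_apply, frobenius_def]
  rw [← hσ]
  exact Algebra.trace_eq_of_algEquiv σ x

noncomputable def psiF (p : ℕ) (F : Type) [Field F] [Fintype F] [Algebra (ZMod p) F]
    (x : F) : ℂ :=
  Complex.exp (2 * (Real.pi : ℂ) * Complex.I *
    ((Algebra.trace (ZMod p) F x).val : ℂ) / (p : ℂ))

noncomputable def etaF (p : ℕ) (F : Type) [Field F] [Fintype F] [Algebra (ZMod p) F]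
    (γ : Fˣ) (n L s : ℕ) : ℂ :=
  ∑ t ∈ Finset.range L, psiF p F ((γ : F) ^ (s + n * t))

lemma psiF_frob (p : ℕ) (hp : p.Prime) (F : Type) [Field F] [Fintype F]
    [Algebra (ZMod p) F] (x : F) : psiF p F (x ^ p) = psiF p F x := by
  unfold psiF; rw [aux_trace_frob p hp F x]

section EtaLemmas

variable (p : ℕ) (F : Type) [Field F] [Fintype F] [Algebra (ZMod p) F]
  (γ : Fˣ) (n L : ℕ)

lemma aux_pow_iff (hord : orderOf γ = n * L) :
    ∀ e e' : ℕ, ((γ : F) ^ e = (γ : F) ^ e') ↔ e ≡ e' [MOD n * L] := by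
  intro e e'
  rw [← Units.val_pow_eq_pow_val, ← Units.val_pow_eq_pow_val, Units.val_inj, ← hord]
  exact pow_eq_pow_iff_modEq

lemma aux_omega_iff (hn : 0 < n) (hL : 0 < L) (hord : orderOf γ = n * L) :
    ∀ t t' : ℕ, (((γ : F) ^ n) ^ t = ((γ : F) ^ n) ^ t') ↔ t ≡ t' [MOD L] := by
  intro t t'
  rw [← pow_mul, ← pow_mul, aux_pow_iff F γ n L hord]
  constructor
  · intro h
    exact Nat.ModEq.mul_left_cancel' hn.ne' h
  · intro h
    exact h.mul_left' n

lemma aux_eta_spell (hn : 0 < n) (hL : 0 < L) (hord : orderOf γ = n * L) (s : ℕ) :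
    etaF p F γ n L s = ∑ z ∈ (Finset.range L).image (fun t => ((γ : F) ^ n) ^ t),
      psiF p F ((γ : F) ^ s * z) := by
  rw [Finset.sum_image]
  · unfold etaF
    apply Finset.sum_congr rfl
    intro t _
    rw [pow_add, pow_mul]
  · intro t ht t' ht' hvv
    have := (aux_omega_iff F γ n L hn hL hord t t').mp hvv
    simp only [Finset.coe_range, Set.mem_Iio, Finset.mem_coe, Finset.mem_range] at ht ht'
    rwa [Nat.ModEq, Nat.mod_eq_of_lt ht, Nat.mod_eq_of_lt ht'] at this

end EtaLemmas

section EtaLemmas2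

variable (p : ℕ) (F : Type) [Field F] [Fintype F] [Algebra (ZMod p) F]
  (γ : Fˣ) (n L : ℕ)

lemma aux_Omega_mul (hn : 0 < n) (hL : 0 < L) (hord : orderOf γ = n * L) :
    ((Finset.range L).image (fun t => ((γ : F) ^ n) ^ t)).image
      (fun z => ((γ : F) ^ n) * z) = (Finset.range L).image (fun t => ((γ : F) ^ n) ^ t) := by
  have hω0 : ((γ : F) ^ n) ≠ 0 := pow_ne_zero _ (Units.ne_zero γ)
  apply Finset.eq_of_subset_of_card_le
  · intro z hz
    simp only [Finset.mem_image, Finset.mem_range] at hz ⊢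
    obtain ⟨y, ⟨t, ht, rfl⟩, rfl⟩ := hz
    refine ⟨(t + 1) % L, Nat.mod_lt _ hL, ?_⟩
    have h2 : ((γ : F) ^ n) ^ ((t + 1) % L) = ((γ : F) ^ n) ^ (t + 1) :=
      (aux_omega_iff F γ n L hn hL hord _ _).mpr (Nat.mod_modEq _ _)
    rw [h2, pow_succ]
    ring
  · rw [Finset.card_image_of_injective _ (mul_right_injective₀ hω0)]

lemma aux_Omega_frob (hp : p.Prime) (hn : 0 < n) (hL : 0 < L) (hord : orderOf γ = n * L) :
    ((Finset.range L).image (fun t => ((γ : F) ^ n) ^ t)).image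
      (fun z => z ^ p) = (Finset.range L).image (fun t => ((γ : F) ^ n) ^ t) := by
  haveI := Fact.mk hp
  haveI : CharP F p := charP_of_injective_algebraMap (algebraMap (ZMod p) F).injective p
  have hfrinj : Function.Injective (fun z : F => z ^ p) := fun x y h =>
    frobenius_inj F p (by simpa [frobenius_def] using h)
  apply Finset.eq_of_subset_of_card_le
  · intro z hz
    simp only [Finset.mem_image, Finset.mem_range] at hz ⊢
    obtain ⟨y, ⟨t, ht, rfl⟩, rfl⟩ := hz
    refine ⟨(t * p) % L, Nat.mod_lt _ hL, ?_⟩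
    have h2 : ((γ : F) ^ n) ^ ((t * p) % L) = ((γ : F) ^ n) ^ (t * p) :=
      (aux_omega_iff F γ n L hn hL hord _ _).mpr (Nat.mod_modEq _ _)
    rw [h2, pow_mul]
  · rw [Finset.card_image_of_injective _ hfrinj]

lemma aux_eta_mod (hn : 0 < n) (hL : 0 < L) (hord : orderOf γ = n * L) :
    ∀ s s' : ℕ, s ≡ s' [MOD n] → etaF p F γ n L s = etaF p F γ n L s' := by
  have hω0 : ((γ : F) ^ n) ≠ 0 := pow_ne_zero _ (Units.ne_zero γ)
  have hshift : ∀ s : ℕ, etaF p F γ n L (s + n) = etaF p F γ n L s := by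
    intro s
    have h1 : ∑ z ∈ ((Finset.range L).image (fun t => ((γ : F) ^ n) ^ t)).image
          (fun z => ((γ : F) ^ n) * z), psiF p F ((γ : F) ^ s * z)
        = ∑ z ∈ (Finset.range L).image (fun t => ((γ : F) ^ n) ^ t),
          psiF p F ((γ : F) ^ s * (((γ : F) ^ n) * z)) :=
      Finset.sum_image (fun x _ y _ h => mul_right_injective₀ hω0 h)
    calc etaF p F γ n L (s + n)
        = ∑ z ∈ (Finset.range L).image (fun t => ((γ : F) ^ n) ^ t),
            psiF p F ((γ : F) ^ (s + n) * z) := aux_eta_spell p F γ n L hn hL hord _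
      _ = ∑ z ∈ (Finset.range L).image (fun t => ((γ : F) ^ n) ^ t),
            psiF p F ((γ : F) ^ s * (((γ : F) ^ n) * z)) := by
          apply Finset.sum_congr rfl
          intro z _
          congr 1
          rw [pow_add]
          ring
      _ = ∑ z ∈ ((Finset.range L).image (fun t => ((γ : F) ^ n) ^ t)).image
            (fun z => ((γ : F) ^ n) * z), psiF p F ((γ : F) ^ s * z) := h1.symm
      _ = ∑ z ∈ (Finset.range L).image (fun t => ((γ : F) ^ n) ^ t),
            psiF p F ((γ : F) ^ s * z) := by rw [aux_Omega_mul F γ n L hn hL hord]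
      _ = etaF p F γ n L s := (aux_eta_spell p F γ n L hn hL hord _).symm
  have hadd : ∀ s d : ℕ, etaF p F γ n L (s + n * d) = etaF p F γ n L s := by
    intro s d
    induction d with
    | zero => simp
    | succ d ih =>
        have h3 : s + n * (d + 1) = (s + n * d) + n := by ring
        rw [h3, hshift, ih]
  intro s s' hss
  have h1 : etaF p F γ n L s = etaF p F γ n L (s % n) := by
    conv_lhs => rw [← Nat.mod_add_div s n]
    exact hadd _ _
  have h2 : etaF p F γ n L s' = etaF p F γ n L (s' % n) := by
    conv_lhs => rw [← Nat.mod_add_div s' n]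
    exact hadd _ _
  rw [h1, h2, hss]

lemma aux_eta_frob (hp : p.Prime) (hn : 0 < n) (hL : 0 < L) (hord : orderOf γ = n * L) :
    ∀ (e s : ℕ), etaF p F γ n L (p ^ e * s) = etaF p F γ n L s := by
  haveI := Fact.mk hp
  haveI : CharP F p := charP_of_injective_algebraMap (algebraMap (ZMod p) F).injective p
  have hfr : ∀ s : ℕ, etaF p F γ n L (p * s) = etaF p F γ n L s := by
    intro s
    have h1 : ∑ z ∈ ((Finset.range L).image (fun t => ((γ : F) ^ n) ^ t)).image
          (fun z => z ^ p), psiF p F ((γ : F) ^ (p * s) * z)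
        = ∑ z ∈ (Finset.range L).image (fun t => ((γ : F) ^ n) ^ t),
          psiF p F ((γ : F) ^ (p * s) * z ^ p) :=
      Finset.sum_image (fun x _ y _ h => frobenius_inj F p (by simpa [frobenius_def] using h))
    calc etaF p F γ n L (p * s)
        = ∑ z ∈ (Finset.range L).image (fun t => ((γ : F) ^ n) ^ t),
            psiF p F ((γ : F) ^ (p * s) * z) := aux_eta_spell p F γ n L hn hL hord _
      _ = ∑ z ∈ ((Finset.range L).image (fun t => ((γ : F) ^ n) ^ t)).image
            (fun z => z ^ p), psiF p F ((γ : F) ^ (p * s) * z) := by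
          rw [aux_Omega_frob p F γ n L hp hn hL hord]
      _ = ∑ z ∈ (Finset.range L).image (fun t => ((γ : F) ^ n) ^ t),
            psiF p F ((γ : F) ^ (p * s) * z ^ p) := h1
      _ = ∑ z ∈ (Finset.range L).image (fun t => ((γ : F) ^ n) ^ t),
            psiF p F ((γ : F) ^ s * z) := by
          apply Finset.sum_congr rfl
          intro z _
          have h4 : (γ : F) ^ (p * s) * z ^ p = ((γ : F) ^ s * z) ^ p := by
            rw [mul_pow, ← pow_mul, mul_comm s p]
          rw [h4]
          exact psiF_frob p hp F _
      _ = etaF p F γ n L s := (aux_eta_spell p F γ n L hn hL hord _).symm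
  intro e s
  induction e with
  | zero => simp
  | succ e ih =>
      have h3 : p ^ (e + 1) * s = p * (p ^ e * s) := by ring
      rw [h3, hfr, ih]

end EtaLemmas2

lemma aux_sumD (p : ℕ) (F : Type) [Field F] [Fintype F] [Algebra (ZMod p) F]
    (γ : Fˣ) (n L : ℕ) (hn : 0 < n) (hL : 0 < L) (hord : orderOf γ = n * L)
    (P q2 k : ℕ)
    (hcancel : ∀ i i' : ℕ, i < P → i' < P → i * q2 ≡ i' * q2 [MOD n] → i = i')
    (Dk : Set F) (hDk : Dk = {x : F | ∃ i < P, ∃ t : ℕ, x = (γ : F) ^ (i * q2 + k * P + n * t)})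
    (b : ℕ) :
    ∑ x ∈ (Set.toFinite Dk).toFinset, psiF p F ((γ : F) ^ b * x)
      = ∑ r ∈ Finset.range P, etaF p F γ n L (b + (r * q2 + k * P)) := by
  have hfin : (Set.toFinite Dk).toFinset
      = ((Finset.range P) ×ˢ (Finset.range L)).image
        (fun it => (γ : F) ^ (it.1 * q2 + k * P + n * it.2)) := by
    ext x
    rw [Set.Finite.mem_toFinset, hDk]
    simp only [Set.mem_setOf_eq, Finset.mem_image, Finset.mem_product, Finset.mem_range]
    constructor
    · rintro ⟨i, hi, t, rfl⟩
      refine ⟨(i, t % L), ⟨hi, Nat.mod_lt _ hL⟩, ?_⟩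
      apply (aux_pow_iff F γ n L hord _ _).mpr
      exact Nat.ModEq.add_left _ ((Nat.mod_modEq t L).mul_left' n)
    · rintro ⟨⟨i, t⟩, ⟨hi, ht⟩, rfl⟩
      exact ⟨i, hi, t, rfl⟩
  have hinj : ∀ x ∈ (Finset.range P) ×ˢ (Finset.range L),
      ∀ y ∈ (Finset.range P) ×ˢ (Finset.range L),
      ((γ : F) ^ (x.1 * q2 + k * P + n * x.2) = (γ : F) ^ (y.1 * q2 + k * P + n * y.2))
      → x = y := by
    rintro ⟨i, t⟩ hx ⟨i', t'⟩ hy hvv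
    simp only [Finset.mem_product, Finset.mem_range] at hx hy
    have hme : i * q2 + k * P + n * t ≡ i' * q2 + k * P + n * t' [MOD n * L] :=
      (aux_pow_iff F γ n L hord _ _).mp hvv
    have hmen : i * q2 + k * P + n * t ≡ i' * q2 + k * P + n * t' [MOD n] :=
      hme.of_dvd (Dvd.intro L rfl)
    have hz : ∀ t0 : ℕ, n * t0 ≡ 0 [MOD n] := fun t0 => (Nat.modEq_zero_iff_dvd).mpr ⟨t0, rfl⟩
    have h2 : i * q2 + k * P ≡ i' * q2 + k * P [MOD n] := by
      have ha := ((hz t).symm.add_left (i * q2 + k * P)).trans hmen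
      have hb := ha.trans ((hz t').add_left (i' * q2 + k * P))
      simpa using hb
    have h3 : i = i' := hcancel i i' hx.1 hy.1 (Nat.ModEq.add_right_cancel' (k * P) h2)
    subst h3
    have h4 : n * t ≡ n * t' [MOD n * L] := Nat.ModEq.add_left_cancel' (i * q2 + k * P) hme
    have h5 : t ≡ t' [MOD L] := Nat.ModEq.mul_left_cancel' hn.ne' h4
    have h6 : t = t' := by
      rwa [Nat.ModEq, Nat.mod_eq_of_lt hx.2, Nat.mod_eq_of_lt hy.2] at h5
    rw [h6]
  rw [hfin, Finset.sum_image hinj, Finset.sum_product]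
  apply Finset.sum_congr rfl
  intro r _
  unfold etaF
  apply Finset.sum_congr rfl
  intro t _
  rw [← pow_add]
  congr 1
  ring


/-- For `N = p1^m * p2`, every `a` has a unique representation
`a ≡ -p2*i_a + p1^(m-1)*j_a (mod N)`, and the additive character sum of `ψ` over
`γ^a * D_k` depends only on `j_a` and `k`, not on `i_a`. -/
theorem char_sum_indep_two_primes
    (p1 p2 m N p f q : ℕ)
    (hp1 : p1.Prime) (hp2 : p2.Prime)
    (hmod : (p1 % 4 = 1 ∧ p2 % 4 = 3) ∨ (p1 % 4 = 3 ∧ p2 % 4 = 1))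
    (hm : 1 ≤ m) (hN : N = p1 ^ m * p2)
    (hp : p.Prime) (hcop : Nat.Coprime p N)
    (hord1 : orderOf (p : ZMod (p1 ^ m)) = Nat.totient (p1 ^ m))
    (hord2 : orderOf (p : ZMod p2) = Nat.totient p2)
    (hf : f = orderOf (p : ZMod N)) (hf2 : 2 * f = N.totient)
    (hq : q = p ^ f)
    (F : Type) [Field F] [Fintype F] [Algebra (ZMod p) F]
    (hF : Fintype.card F = q)
    (γ : Fˣ) (hγ : orderOf γ = q - 1)
    (D : ℕ → Set F)
    (hD : ∀ k, D k = {x : F | ∃ i < p1 ^ (m - 1), ∃ t : ℕ,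
        x = ((γ : F)) ^ (i * p2 + k * p1 ^ (m - 1) + N * t)}) :
    (∀ a < N, ∃! ij : ℕ × ℕ, (ij.1 < p1 ^ (m - 1) ∧ ij.2 < p1 * p2) ∧
        (a : ZMod N) = -((p2 * ij.1 : ℕ) : ZMod N) + ((p1 ^ (m - 1) * ij.2 : ℕ) : ZMod N)) ∧
    (∀ a a' : ℕ, a < N → a' < N →
      ∀ i i' j : ℕ, i < p1 ^ (m - 1) → i' < p1 ^ (m - 1) → j < p1 * p2 →
        (a : ZMod N) = -((p2 * i : ℕ) : ZMod N) + ((p1 ^ (m - 1) * j : ℕ) : ZMod N) →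
        (a' : ZMod N) = -((p2 * i' : ℕ) : ZMod N) + ((p1 ^ (m - 1) * j : ℕ) : ZMod N) →
        ∀ k < p1 * p2,
          ∑ x ∈ (Set.toFinite (D k)).toFinset,
            Complex.exp (2 * (Real.pi : ℂ) * Complex.I *
              ((Algebra.trace (ZMod p) F ((γ : F) ^ a * x)).val : ℂ) / (p : ℂ)) =
          ∑ x ∈ (Set.toFinite (D k)).toFinset,
            Complex.exp (2 * (Real.pi : ℂ) * Complex.I *
              ((Algebra.trace (ZMod p) F ((γ : F) ^ a' * x)).val : ℂ) / (p : ℂ))) := by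
  subst hN
  haveI : Fact p.Prime := ⟨hp⟩
  have hp1pos : 0 < p1 := hp1.pos
  have hp2pos : 0 < p2 := hp2.pos
  have hne : p1 ≠ p2 := by rcases hmod with ⟨h1, h2⟩ | ⟨h1, h2⟩ <;> omega
  have hp1odd : p1 % 2 = 1 := by
    have h4 := Nat.mod_mod_of_dvd p1 (by norm_num : (2:ℕ) ∣ 4)
    rcases hmod with ⟨h1, _⟩ | ⟨h1, _⟩ <;> omega
  have hNpos : 0 < p1 ^ m * p2 := by positivity
  haveI : NeZero (p1 ^ m * p2) := ⟨hNpos.ne'⟩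
  have hcopN : Nat.Coprime (p1 ^ m) p2 := ((Nat.coprime_primes hp1 hp2).mpr hne).pow_left m
  have hcoP2 : Nat.Coprime (p1 ^ (m - 1)) p2 :=
    ((Nat.coprime_primes hp1 hp2).mpr hne).pow_left _
  have hcop1m : Nat.Coprime p (p1 ^ m) :=
    Nat.Coprime.coprime_dvd_right (dvd_mul_right _ _) hcop
  have hcop1 : Nat.Coprime p p1 :=
    Nat.Coprime.coprime_dvd_right (dvd_pow_self p1 (by omega)) hcop1m
  have hcop2 : Nat.Coprime p p2 :=
    Nat.Coprime.coprime_dvd_right (dvd_mul_left _ _) hcop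
  have horder : orderOf (p : ZMod (p1 ^ m * p2)) =
      Nat.lcm (orderOf (p : ZMod (p1 ^ m))) (orderOf (p : ZMod p2)) := by
    set e := ZMod.chineseRemainder hcopN with he
    have h1 : orderOf (e.toMulEquiv.toMonoidHom (p : ZMod (p1 ^ m * p2)))
        = orderOf (p : ZMod (p1 ^ m * p2)) :=
      orderOf_injective e.toMulEquiv.toMonoidHom e.toMulEquiv.injective _
    have h2 : e.toMulEquiv.toMonoidHom (p : ZMod (p1 ^ m * p2))
        = ((p : ZMod (p1 ^ m)), (p : ZMod p2)) := by
      show e (p : ZMod (p1 ^ m * p2)) = _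
      rw [map_natCast]
      exact Prod.ext (Prod.fst_natCast p) (Prod.snd_natCast p)
    rw [← h1, h2, Prod.orderOf]
  have hfpos : 0 < f := by
    have h5 := Nat.totient_pos.mpr hNpos
    omega
  have hgcd2 : Nat.gcd (Nat.totient (p1 ^ m)) (Nat.totient p2) = 2 := by
    have hf' : f = Nat.lcm (Nat.totient (p1 ^ m)) (Nat.totient p2) := by
      rw [hf, horder, hord1, hord2]
    have htot : (p1 ^ m * p2).totient = Nat.totient (p1 ^ m) * Nat.totient p2 :=
      Nat.totient_mul hcopN
    have h3 : Nat.gcd (Nat.totient (p1 ^ m)) (Nat.totient p2)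
        * Nat.lcm (Nat.totient (p1 ^ m)) (Nat.totient p2)
        = 2 * Nat.lcm (Nat.totient (p1 ^ m)) (Nat.totient p2) := by
      rw [Nat.gcd_mul_lcm, ← htot, ← hf2, hf']
    have hlcmpos : 0 < Nat.lcm (Nat.totient (p1 ^ m)) (Nat.totient p2) := by
      rw [← hf']; exact hfpos
    exact Nat.eq_of_mul_eq_mul_right hlcmpos h3
  have core : ∀ s : ℕ, ¬ p1 ^ (m - 1) ∣ s →
      ∃ e, p ^ e * s ≡ s + p1 ^ (m - 1) * p2 [MOD p1 ^ m * p2] :=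
    aux_core p1 p2 m p hp1 hp2 hm hp1odd hne hcop1 hcop2 hord1 hord2 hgcd2
  constructor
  · intro a _
    exact aux_part1 p1 p2 m hp1 hp2 hne hm a
  -- Part 2
  intro a a' _ _ i i' j hi hi' hj heqa heqa' k _
  have hq2 : 2 ≤ q := by
    calc 2 ≤ p := hp.two_le
      _ = p ^ 1 := (pow_one p).symm
      _ ≤ p ^ f := Nat.pow_le_pow_right hp.pos hfpos
      _ = q := hq.symm
  have hNdvd : (p1 ^ m * p2) ∣ q - 1 := by
    have h1 : ((p : ZMod (p1 ^ m * p2))) ^ f = 1 := by rw [hf]; exact pow_orderOf_eq_one _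
    have h2 : ((p ^ f : ℕ) : ZMod (p1 ^ m * p2)) = ((1 : ℕ) : ZMod (p1 ^ m * p2)) := by
      push_cast; simpa using h1
    have h3 : p ^ f ≡ 1 [MOD p1 ^ m * p2] := (ZMod.natCast_eq_natCast_iff _ _ _).mp h2
    have h4 := (Nat.modEq_iff_dvd' (Nat.one_le_pow _ _ hp.pos)).mp h3.symm
    rwa [hq]
  obtain ⟨L, hL⟩ := hNdvd
  have hLpos : 0 < L := by
    rcases Nat.eq_zero_or_pos L with h | h
    · rw [h, Nat.mul_zero] at hL; omega
    · exact h
  have hordγ : orderOf γ = (p1 ^ m * p2) * L := by rw [hγ, hL]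
  -- cancellation hypothesis for aux_sumD
  have hPdvd : (p1 ^ (m - 1)) ∣ (p1 ^ m * p2) :=
    dvd_mul_of_dvd_left (pow_dvd_pow p1 (by omega)) p2
  have hPpos : 0 < p1 ^ (m - 1) := by positivity
  have hcancel : ∀ i0 i0' : ℕ, i0 < p1 ^ (m - 1) → i0' < p1 ^ (m - 1) →
      i0 * p2 ≡ i0' * p2 [MOD p1 ^ m * p2] → i0 = i0' := by
    intro i0 i0' h0 h0' hmm
    have h1 : i0 * p2 ≡ i0' * p2 [MOD p1 ^ (m - 1)] := hmm.of_dvd hPdvd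
    have h2 : i0 ≡ i0' [MOD p1 ^ (m - 1)] :=
      Nat.ModEq.cancel_right_of_coprime hcoP2 h1
    rwa [Nat.ModEq, Nat.mod_eq_of_lt h0, Nat.mod_eq_of_lt h0'] at h2
  -- convert both sides to eta sums
  have hsum : ∀ b : ℕ,
      (∑ x ∈ (Set.toFinite (D k)).toFinset,
        Complex.exp (2 * (Real.pi : ℂ) * Complex.I *
          ((Algebra.trace (ZMod p) F ((γ : F) ^ b * x)).val : ℂ) / (p : ℂ)))
      = ∑ r ∈ Finset.range (p1 ^ (m - 1)),
          etaF p F γ (p1 ^ m * p2) L (b + (r * p2 + k * p1 ^ (m - 1))) := by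
    intro b
    have hrfl : (∑ x ∈ (Set.toFinite (D k)).toFinset,
        Complex.exp (2 * (Real.pi : ℂ) * Complex.I *
          ((Algebra.trace (ZMod p) F ((γ : F) ^ b * x)).val : ℂ) / (p : ℂ)))
        = ∑ x ∈ (Set.toFinite (D k)).toFinset, psiF p F ((γ : F) ^ b * x) := rfl
    rw [hrfl]
    exact aux_sumD p F γ (p1 ^ m * p2) L hNpos hLpos hordγ
      (p1 ^ (m - 1)) p2 k hcancel (D k) (hD k) b
  rw [hsum a, hsum a']
  -- H function on ZMod N
  set H : ZMod (p1 ^ m * p2) → ℂ :=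
    fun v => etaF p F γ (p1 ^ m * p2) L v.val with hH
  have hetaH : ∀ s : ℕ, etaF p F γ (p1 ^ m * p2) L s = H ((s : ZMod (p1 ^ m * p2))) := by
    intro s
    rw [hH]
    simp only
    rw [ZMod.val_natCast]
    exact aux_eta_mod p F γ _ L hNpos hLpos hordγ s (s % (p1 ^ m * p2))
      (Nat.mod_modEq s _).symm
  have hvv : ∀ v : ZMod (p1 ^ m * p2), ((v.val : ℕ) : ZMod (p1 ^ m * p2)) = v := by
    intro v; rw [ZMod.natCast_val, ZMod.cast_id]
  have hHshift : ∀ v : ZMod (p1 ^ m * p2), ¬ (p1 ^ (m - 1) ∣ v.val) →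
      H (v + ((p1 ^ (m - 1) * p2 : ℕ) : ZMod (p1 ^ m * p2))) = H v := by
    intro v hv
    obtain ⟨e, hee⟩ := core v.val hv
    have h1 : (v + ((p1 ^ (m - 1) * p2 : ℕ) : ZMod (p1 ^ m * p2))).val
        ≡ v.val + p1 ^ (m - 1) * p2 [MOD p1 ^ m * p2] := by
      apply (ZMod.natCast_eq_natCast_iff _ _ _).mp
      rw [hvv]
      rw [Nat.cast_add, hvv]
    calc H (v + ((p1 ^ (m - 1) * p2 : ℕ) : ZMod (p1 ^ m * p2)))
        = etaF p F γ (p1 ^ m * p2) L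
            ((v + ((p1 ^ (m - 1) * p2 : ℕ) : ZMod (p1 ^ m * p2))).val) := by rw [hH]
      _ = etaF p F γ (p1 ^ m * p2) L (v.val + p1 ^ (m - 1) * p2) :=
          aux_eta_mod p F γ _ L hNpos hLpos hordγ _ _ h1
      _ = etaF p F γ (p1 ^ m * p2) L (p ^ e * v.val) :=
          (aux_eta_mod p F γ _ L hNpos hLpos hordγ _ _ hee).symm
      _ = etaF p F γ (p1 ^ m * p2) L v.val :=
          aux_eta_frob p F γ _ L hp hNpos hLpos hordγ e v.val
      _ = H v := by rw [hH]
  -- telescoping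
  have hT : ∀ (u : ZMod (p1 ^ m * p2)),
      (ZMod.castHom hPdvd (ZMod (p1 ^ (m - 1)))) u = 0 →
      ∀ ia : ℕ, ia < p1 ^ (m - 1) →
      (∑ r ∈ Finset.range (p1 ^ (m - 1)),
        H ((p2 : ZMod (p1 ^ m * p2)) * r - (p2 : ZMod (p1 ^ m * p2)) * ia + u))
      = ∑ r ∈ Finset.range (p1 ^ (m - 1)),
        H ((p2 : ZMod (p1 ^ m * p2)) * r + u) := by
    intro u hu ia
    induction ia with
    | zero =>
        intro _
        apply Finset.sum_congr rfl
        intro r _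
        norm_num
    | succ ia ih =>
        intro hia1
        have step : (∑ r ∈ Finset.range (p1 ^ (m - 1)),
            H ((p2 : ZMod (p1 ^ m * p2)) * r - (p2 : ZMod (p1 ^ m * p2)) * (ia + 1 : ℕ) + u))
            = ∑ r ∈ Finset.range (p1 ^ (m - 1)),
            H ((p2 : ZMod (p1 ^ m * p2)) * r - (p2 : ZMod (p1 ^ m * p2)) * ia + u) := by
          set g : ℕ → ℂ := fun r =>
            H ((p2 : ZMod (p1 ^ m * p2)) * r - (p2 : ZMod (p1 ^ m * p2)) * (ia + 1 : ℕ) + u)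
            with hg
          have e1 := Finset.sum_range_succ' g (p1 ^ (m - 1))
          have e2 := Finset.sum_range_succ g (p1 ^ (m - 1))
          have e3 : g (p1 ^ (m - 1)) = g 0 := by
            rw [hg]
            simp only
            have hvp : ((p2 : ZMod (p1 ^ m * p2)) * ((p1 ^ (m - 1) : ℕ) : ZMod (p1 ^ m * p2))
                - (p2 : ZMod (p1 ^ m * p2)) * (ia + 1 : ℕ) + u)
                = ((p2 : ZMod (p1 ^ m * p2)) * ((0 : ℕ) : ZMod (p1 ^ m * p2))
                  - (p2 : ZMod (p1 ^ m * p2)) * (ia + 1 : ℕ) + u)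
                  + ((p1 ^ (m - 1) * p2 : ℕ) : ZMod (p1 ^ m * p2)) := by
              push_cast
              ring
            rw [hvp]
            apply hHshift
            intro hdvd
            set v : ZMod (p1 ^ m * p2) :=
              (p2 : ZMod (p1 ^ m * p2)) * ((0 : ℕ) : ZMod (p1 ^ m * p2))
                - (p2 : ZMod (p1 ^ m * p2)) * (ia + 1 : ℕ) + u with hvdef
            have hπv : (ZMod.castHom hPdvd (ZMod (p1 ^ (m - 1)))) v = 0 := by
              have h6 : ((v.val : ℕ) : ZMod (p1 ^ (m - 1))) = 0 :=
                (ZMod.natCast_eq_zero_iff _ _).mpr hdvd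
              calc (ZMod.castHom hPdvd (ZMod (p1 ^ (m - 1)))) v
                  = (ZMod.castHom hPdvd (ZMod (p1 ^ (m - 1)))) ((v.val : ℕ)
                    : ZMod (p1 ^ m * p2)) := by rw [hvv]
                _ = ((v.val : ℕ) : ZMod (p1 ^ (m - 1))) := map_natCast _ _
                _ = 0 := h6
            have hπv2 : (ZMod.castHom hPdvd (ZMod (p1 ^ (m - 1)))) v
                = -((p2 * (ia + 1) : ℕ) : ZMod (p1 ^ (m - 1))) := by
              rw [hvdef]
              rw [map_add, map_sub, map_mul, map_mul]
              rw [map_natCast, map_natCast, map_natCast, hu]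
              push_cast
              ring
            have h7 : ((p2 * (ia + 1) : ℕ) : ZMod (p1 ^ (m - 1))) = 0 := by
              have := hπv.symm.trans hπv2
              have h8 := congrArg Neg.neg this
              simpa using h8.symm
            have h9 : p1 ^ (m - 1) ∣ p2 * (ia + 1) :=
              (ZMod.natCast_eq_zero_iff _ _).mp h7
            have h10 : p1 ^ (m - 1) ∣ (ia + 1) := by
              apply Nat.Coprime.dvd_of_dvd_mul_right hcoP2
              rwa [mul_comm (ia + 1) p2]
            have h11 : p1 ^ (m - 1) ≤ ia + 1 := Nat.le_of_dvd (by omega) h10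
            omega
          have e4 : ∀ r : ℕ,
              H ((p2 : ZMod (p1 ^ m * p2)) * r - (p2 : ZMod (p1 ^ m * p2)) * ia + u)
              = g (r + 1) := by
            intro r
            rw [hg]
            simp only
            congr 1
            push_cast
            ring
          have e5 : ∑ r ∈ Finset.range (p1 ^ (m - 1)),
              H ((p2 : ZMod (p1 ^ m * p2)) * r - (p2 : ZMod (p1 ^ m * p2)) * ia + u)
              = ∑ r ∈ Finset.range (p1 ^ (m - 1)), g (r + 1) :=
            Finset.sum_congr rfl (fun r _ => e4 r)
          have e6 : (∑ r ∈ Finset.range (p1 ^ (m - 1)), g (r + 1)) + g 0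
              = (∑ r ∈ Finset.range (p1 ^ (m - 1)), g r) + g 0 := by
            rw [← e1, e2, e3]
          have e7 : (∑ r ∈ Finset.range (p1 ^ (m - 1)), g (r + 1))
              = ∑ r ∈ Finset.range (p1 ^ (m - 1)), g r := by
            exact add_right_cancel e6
          rw [e5, e7]
        have hlt : ia < p1 ^ (m - 1) := by omega
        exact step.trans (ih hlt)
  -- final assembly
  set u : ZMod (p1 ^ m * p2) :=
    ((p1 ^ (m - 1) : ℕ) : ZMod (p1 ^ m * p2)) * ((j : ZMod (p1 ^ m * p2)) + (k : ℕ)) with hu'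
  have hu : (ZMod.castHom hPdvd (ZMod (p1 ^ (m - 1)))) u = 0 := by
    rw [hu', map_mul, map_natCast]
    rw [ZMod.natCast_self]
    ring
  have harg : ∀ (b : ℕ) (ib : ℕ),
      ((b : ZMod (p1 ^ m * p2)) = -((p2 * ib : ℕ) : ZMod (p1 ^ m * p2))
        + ((p1 ^ (m - 1) * j : ℕ) : ZMod (p1 ^ m * p2))) →
      ∀ r : ℕ, ((b + (r * p2 + k * p1 ^ (m - 1)) : ℕ) : ZMod (p1 ^ m * p2))
        = (p2 : ZMod (p1 ^ m * p2)) * r - (p2 : ZMod (p1 ^ m * p2)) * ib + u := by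
    intro b ib hb r
    rw [hu']
    push_cast
    rw [hb]
    push_cast
    ring
  have hfinal : ∀ (b ib : ℕ), ib < p1 ^ (m - 1) →
      ((b : ZMod (p1 ^ m * p2)) = -((p2 * ib : ℕ) : ZMod (p1 ^ m * p2))
        + ((p1 ^ (m - 1) * j : ℕ) : ZMod (p1 ^ m * p2))) →
      (∑ r ∈ Finset.range (p1 ^ (m - 1)),
        etaF p F γ (p1 ^ m * p2) L (b + (r * p2 + k * p1 ^ (m - 1))))
      = ∑ r ∈ Finset.range (p1 ^ (m - 1)),
        H ((p2 : ZMod (p1 ^ m * p2)) * r + u) := by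
    intro b ib hib hb
    have h1 : ∀ r : ℕ, etaF p F γ (p1 ^ m * p2) L (b + (r * p2 + k * p1 ^ (m - 1)))
        = H ((p2 : ZMod (p1 ^ m * p2)) * r - (p2 : ZMod (p1 ^ m * p2)) * ib + u) := by
      intro r
      rw [hetaH, harg b ib hb r]
    calc (∑ r ∈ Finset.range (p1 ^ (m - 1)),
        etaF p F γ (p1 ^ m * p2) L (b + (r * p2 + k * p1 ^ (m - 1))))
        = ∑ r ∈ Finset.range (p1 ^ (m - 1)),
          H ((p2 : ZMod (p1 ^ m * p2)) * r - (p2 : ZMod (p1 ^ m * p2)) * ib + u) :=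
        Finset.sum_congr rfl (fun r _ => h1 r)
      _ = ∑ r ∈ Finset.range (p1 ^ (m - 1)),
          H ((p2 : ZMod (p1 ^ m * p2)) * r + u) := hT u hu ib hib
  rw [hfinal a i hi heqa, hfinal a' i' hi' heqa']
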